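/- Let α ∈ (0,1), m ≥ 1, 0 ≤ r ≤ m, and define K(m,r,α) = { k ∈ {1,…,m} : Σ_{i=0}^k C(m−r, k−i) C(r, i) (−α/(1−α))^i = 0 }. Suppose f : [0,1]^m → ℂ has the form f(x_1,…,x_m) = Σ_{k ∈ K(m,r,α)} Σ_{S ⊆ [m], |S|=k} g_k(x_S), where each g_k : [0,1]^k → ℂ is an integrable symmetric function with ∫_0^1 g_k(x_1,…,x_k) dx_i = 0 for every i ∈ [k]. Then ∫_{A^{m−r} × (A^c)^r} f = 0 for every measurable A ⊆ [0,1] with λ(A) = α. -/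

import Mathlib

open MeasureTheory

/-- The unit cube `[0,1]^k` as a subset of `Fin k → ℝ`. -/
def unitCube (k : ℕ) : Set (Fin k → ℝ) := Set.univ.pi fun _ => Set.Icc (0 : ℝ) 1

open Classical in
/-- `K(m,r,α) = { k ∈ [m] : Σ_{i=0}^k C(m−r,k−i) C(r,i) (−α/(1−α))^i = 0 }`. -/
noncomputable def Kset (m r : ℕ) (α : ℝ) : Finset ℕ :=
  (Finset.Icc 1 m).filter fun k =>
    ∑ i ∈ Finset.range (k + 1),
      ((m - r).choose (k - i) : ℝ) * (r.choose i : ℝ) * (-α / (1 - α)) ^ i = 0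

namespace SymAux

noncomputable def mu01 : Measure ℝ := volume.restrict (Set.Icc 0 1)

instance : IsProbabilityMeasure mu01 :=
  ⟨by simp [mu01, Measure.restrict_apply_univ, Real.volume_Icc]⟩

noncomputable def piM (n : ℕ) : Measure (Fin n → ℝ) := Measure.pi fun _ : Fin n => mu01

instance (n : ℕ) : IsProbabilityMeasure (piM n) := by unfold piM; infer_instance

lemma pi_restrict {n : ℕ} (ν : Fin n → Measure ℝ) [∀ i, SigmaFinite (ν i)]
    (s : Fin n → Set ℝ) (hs : ∀ i, MeasurableSet (s i)) :
    Measure.pi (fun i => (ν i).restrict (s i)) = (Measure.pi ν).restrict (Set.univ.pi s) := by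
  refine Measure.pi_eq fun t ht => ?_
  rw [Measure.restrict_apply (MeasurableSet.univ_pi ht), ← Set.pi_inter_distrib, Measure.pi_pi]
  exact Finset.prod_congr rfl fun i _ => (Measure.restrict_apply (ht i)).symm

lemma integral_eq_zero_of_update {n : ℕ} (F : (Fin n → ℝ) → ℂ)
    (hF : Integrable F (piM n)) (i : Fin n)
    (h0 : ∀ x : Fin n → ℝ, ∫ t, F (Function.update x i t) ∂mu01 = 0) :
    ∫ x, F x ∂(piM n) = 0 := by
  cases n with
  | zero => exact absurd i.2 (by simp)
  | succ n =>
    have hmp := measurePreserving_piFinSuccAbove (fun _ : Fin (n+1) => mu01) i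
    have hmps := hmp.symm (MeasurableEquiv.piFinSuccAbove (fun _ => ℝ) i)
    rw [piM, ← hmps.integral_comp' F]
    have hint : Integrable (fun y => F ((MeasurableEquiv.piFinSuccAbove (fun _ => ℝ) i).symm y))
        (mu01.prod (Measure.pi fun _ => mu01)) :=
      (hmps.integrable_comp_emb (MeasurableEquiv.measurableEmbedding _)).mpr hF
    rw [MeasureTheory.integral_prod_symm _ hint]
    have : ∀ z : Fin n → ℝ, ∫ t, F ((MeasurableEquiv.piFinSuccAbove (fun _ => ℝ) i).symm (t, z)) ∂mu01 = 0 := by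
      intro z
      have he : ∀ t : ℝ, ((MeasurableEquiv.piFinSuccAbove (fun _ : Fin (n+1) => ℝ) i).symm (t, z))
          = Function.update (i.insertNth 0 z) i t := by
        intro t
        rw [Fin.update_insertNth]
        rfl
      simp_rw [he]
      exact h0 _
    simp_rw [this, integral_zero]

lemma measurePreserving_proj {k m : ℕ} (e : Fin k → Fin m) (he : Function.Injective e) :
    MeasurePreserving (fun x : Fin m → ℝ => fun j => x (e j)) (piM m) (piM k) := by
  classical
  have hmeas : Measurable (fun x : Fin m → ℝ => fun j => x (e j)) :=
    measurable_pi_iff.2 fun j => measurable_pi_apply (e j)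
  refine ⟨hmeas, ?_⟩
  refine (Measure.pi_eq fun t ht => ?_).symm
  rw [Measure.map_apply hmeas (MeasurableSet.univ_pi ht)]
  have hpre : (fun x : Fin m → ℝ => fun j => x (e j)) ⁻¹' (Set.univ.pi t)
      = Set.univ.pi (fun i => ⋂ j ∈ Finset.univ.filter (fun j => e j = i), t j) := by
    ext x
    simp only [Set.mem_preimage, Set.mem_univ_pi, Set.mem_iInter, Finset.mem_filter,
      Finset.mem_univ, true_and]
    constructor
    · rintro h i j rfl; exact h j
    · intro h j; exact h (e j) j rfl
  rw [hpre, piM, Measure.pi_pi]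
  have hT1 : ∀ j : Fin k,
      (⋂ j' ∈ Finset.univ.filter (fun j' => e j' = e j), t j') = t j := by
    intro j
    have : Finset.univ.filter (fun j' => e j' = e j) = {j} := by
      ext j'; simp [he.eq_iff]
    rw [this]
    simp
  have hT2 : ∀ i : Fin m, i ∉ Finset.univ.image e →
      (⋂ j ∈ Finset.univ.filter (fun j => e j = i), t j) = Set.univ := by
    intro i hi
    have : Finset.univ.filter (fun j => e j = i) = ∅ := by
      ext j
      simp only [Finset.mem_filter, Finset.mem_univ, true_and, Finset.notMem_empty, iff_false]
      intro h; exact hi (Finset.mem_image.2 ⟨j, Finset.mem_univ j, h⟩)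
    rw [this]
    simp
  calc ∏ i : Fin m, mu01 (⋂ j ∈ Finset.univ.filter (fun j => e j = i), t j)
      = ∏ i ∈ Finset.univ.image e, mu01 (⋂ j ∈ Finset.univ.filter (fun j => e j = i), t j) := by
        refine (Finset.prod_subset (Finset.subset_univ _) fun i _ hi => ?_).symm
        rw [hT2 i hi]; simp
    _ = ∏ j : Fin k, mu01 (⋂ j' ∈ Finset.univ.filter (fun j' => e j' = e j), t j') := by
        rw [Finset.prod_image (fun a _ b _ hab => he hab)]
    _ = ∏ j : Fin k, mu01 (t j) := by
        exact Finset.prod_congr rfl fun j _ => by rw [hT1 j]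


lemma card_filter_lt {m c : ℕ} (hc : c ≤ m) :
    (Finset.univ.filter fun i : Fin m => (i : ℕ) < c).card = c := by
  have h : ∀ x ∈ Finset.range c, x < m := fun x hx =>
    lt_of_lt_of_le (Finset.mem_range.mp hx) hc
  have : (Finset.univ.filter fun i : Fin m => (i : ℕ) < c) = Finset.attachFin (Finset.range c) h := by
    ext i
    simp [Finset.mem_attachFin]
  rw [this, Finset.card_attachFin, Finset.card_range]

lemma card_fiber {m : ℕ} (P : Fin m → Prop) [DecidablePred P] (k i : ℕ) (hik : i ≤ k) :
    (Finset.univ.filter fun S : Finset (Fin m) =>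
        S.card = k ∧ (S.filter fun a => ¬ P a).card = i).card
      = ((Finset.univ.filter P).card.choose (k - i)) *
        ((Finset.univ.filter fun a => ¬ P a).card.choose i) := by
  classical
  rw [← Finset.card_powersetCard, ← Finset.card_powersetCard, ← Finset.card_product]
  refine Finset.card_nbij' (fun S => (S.filter P, S.filter fun a => ¬ P a))
    (fun p => p.1 ∪ p.2) ?_ ?_ ?_ ?_
  · intro S hS
    simp only [Finset.mem_coe, Finset.mem_filter, Finset.mem_univ, true_and] at hS
    obtain ⟨hcard, hbs⟩ := hS
    have hsum : (S.filter P).card + (S.filter fun a => ¬ P a).card = S.card :=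
      Finset.card_filter_add_card_filter_not P
    simp only [Finset.mem_coe, Finset.mem_product, Finset.mem_powersetCard]
    refine ⟨⟨Finset.filter_subset_filter P (Finset.subset_univ S), by omega⟩,
      ⟨Finset.filter_subset_filter _ (Finset.subset_univ S), hbs⟩⟩
  · intro p hp
    simp only [Finset.mem_coe, Finset.mem_product, Finset.mem_powersetCard] at hp
    obtain ⟨⟨h1s, h1c⟩, ⟨h2s, h2c⟩⟩ := hp
    have hdisj : Disjoint p.1 p.2 := by
      refine Finset.disjoint_left.2 fun a ha1 ha2 => ?_
      have hP : P a := (Finset.mem_filter.1 (h1s ha1)).2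
      exact (Finset.mem_filter.1 (h2s ha2)).2 hP
    have hfilter2 : ((p.1 ∪ p.2).filter fun a => ¬ P a) = p.2 := by
      rw [Finset.filter_union]
      rw [Finset.filter_false_of_mem fun a ha => not_not.2 (Finset.mem_filter.1 (h1s ha)).2,
        Finset.filter_true_of_mem fun a ha => (Finset.mem_filter.1 (h2s ha)).2]
      simp
    simp only [Finset.mem_coe, Finset.mem_filter, Finset.mem_univ, true_and]
    constructor
    · rw [Finset.card_union_of_disjoint hdisj, h1c, h2c]; omega
    · rw [hfilter2]; exact h2c
  · intro S _
    exact Finset.filter_union_filter_not_eq P S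
  · intro p hp
    simp only [Finset.mem_coe, Finset.mem_product, Finset.mem_powersetCard] at hp
    obtain ⟨⟨h1s, h1c⟩, ⟨h2s, h2c⟩⟩ := hp
    have hfilter1 : ((p.1 ∪ p.2).filter P) = p.1 := by
      rw [Finset.filter_union]
      rw [Finset.filter_true_of_mem fun a ha => (Finset.mem_filter.1 (h1s ha)).2,
        Finset.filter_false_of_mem fun a ha => (Finset.mem_filter.1 (h2s ha)).2]
      simp
    have hfilter2 : ((p.1 ∪ p.2).filter fun a => ¬ P a) = p.2 := by
      rw [Finset.filter_union]
      rw [Finset.filter_false_of_mem fun a ha => not_not.2 (Finset.mem_filter.1 (h1s ha)).2,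
        Finset.filter_true_of_mem fun a ha => (Finset.mem_filter.1 (h2s ha)).2]
      simp
    dsimp only
    rw [hfilter1, hfilter2]

lemma keyident {m r k : ℕ} (hr : r ≤ m) (hk : k ≤ m) {α : ℝ}
    (h0 : 0 < α) (h1 : α < 1)
    (hK : ∑ i ∈ Finset.range (k + 1),
      ((m - r).choose (k - i) : ℝ) * (r.choose i : ℝ) * (-α / (1 - α)) ^ i = 0) :
    ∑ i ∈ Finset.range (k + 1),
      ((m - r).choose (k - i) : ℝ) * (r.choose i : ℝ) * (-1) ^ i
        * α ^ (m - r - (k - i)) * (1 - α) ^ (r - i) = 0 := by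
  have hαne : α ≠ 0 := ne_of_gt h0
  have h1αne : (1 : ℝ) - α ≠ 0 := by linarith
  have hconst : ∀ i ∈ Finset.range (k + 1),
      ((m - r).choose (k - i) : ℝ) * (r.choose i : ℝ) * (-1) ^ i
        * α ^ (m - r - (k - i)) * (1 - α) ^ (r - i)
      = (α ^ (m - r) * (1 - α) ^ r / α ^ k) *
        (((m - r).choose (k - i) : ℝ) * (r.choose i : ℝ) * (-α / (1 - α)) ^ i) := by
    intro i hi
    have hik : i ≤ k := Nat.lt_succ_iff.mp (Finset.mem_range.mp hi)
    by_cases hc1 : k - i ≤ m - r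
    · by_cases hc2 : i ≤ r
      · have e1 : α ^ (m - r) = α ^ (m - r - (k - i)) * α ^ (k - i) := by
          rw [← pow_add]
          congr 1
          omega
        have e2 : (1 - α) ^ r = (1 - α) ^ (r - i) * (1 - α) ^ i := by
          rw [← pow_add]
          congr 1
          omega
        have e3 : α ^ k = α ^ (k - i) * α ^ i := by
          rw [← pow_add]
          congr 1
          omega
        rw [e1, e2, e3, div_pow, neg_pow]
        field_simp
        ring
      · rw [Nat.choose_eq_zero_of_lt (show r < i by omega)]
        ring
    · rw [Nat.choose_eq_zero_of_lt (show m - r < k - i by omega)]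
      ring
  rw [Finset.sum_congr rfl hconst, ← Finset.mul_sum, hK, mul_zero]

lemma core {m : ℕ} (S : Finset (Fin m)) (G : (Fin S.card → ℝ) → ℂ)
    (hGint : Integrable G (piM S.card))
    (hGmarg : ∀ (j : Fin S.card) (x : Fin S.card → ℝ),
      ∫ t, G (Function.update x j t) ∂mu01 = 0)
    (H : ℝ → ℂ) (hHm : Measurable H) (hHbd : ∀ t, ‖H t‖ ≤ 2)
    (hH0 : ∫ t, H t ∂mu01 = 0)
    (B : Fin m → Set ℝ) (hB : ∀ i, MeasurableSet (B i))
    (c ε : Fin m → ℂ)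
    (hdecomp : ∀ i : Fin m, ∀ t ∈ Set.Icc (0:ℝ) 1,
      Set.indicator (B i) (fun _ => (1:ℂ)) t = c i + ε i * H t) :
    ∫ x in Set.univ.pi B, G (fun j => x ((S.orderIsoOfFin rfl j : Fin m))) ∂(piM m)
      = ((∏ i ∈ S, ε i) * ∏ i ∈ Finset.univ \ S, c i) *
        ∫ y, (∏ j, H (y j)) * G y ∂(piM S.card) := by
  classical
  set emb : Fin S.card → Fin m := fun j => ((S.orderIsoOfFin rfl j : Fin m)) with hemb
  have hembmem : ∀ j, emb j ∈ S := fun j => (S.orderIsoOfFin rfl j).2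
  have hembinj : Function.Injective emb :=
    fun a b hab => (S.orderIsoOfFin rfl).injective (Subtype.ext hab)
  set proj : (Fin m → ℝ) → (Fin S.card → ℝ) := fun x => fun j => x (emb j) with hprojdef
  have hmp : MeasurePreserving proj (piM m) (piM S.card) := measurePreserving_proj emb hembinj
  set GS : (Fin m → ℝ) → ℂ := fun x => G (proj x) with hGSdef
  have hGSint : Integrable GS (piM m) := by
    have := (hmp.integrable_comp hGint.aestronglyMeasurable).mpr hGint
    exact this
  have hINT : ∀ t : Finset (Fin m),
      Integrable (fun x : Fin m → ℝ => (∏ i ∈ t, H (x i)) * GS x) (piM m) := by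
    intro t
    refine Integrable.bdd_mul hGSint
      ((Finset.measurable_prod t fun i _ =>
        hHm.comp (measurable_pi_apply i)).aestronglyMeasurable) (c := 2 ^ m) (ae_of_all _ fun x => ?_)
    calc ‖∏ i ∈ t, H (x i)‖ = ∏ i ∈ t, ‖H (x i)‖ := norm_prod _ _
      _ ≤ ∏ i ∈ t, 2 := Finset.prod_le_prod (fun i _ => norm_nonneg _) (fun i _ => hHbd _)
      _ = 2 ^ t.card := by rw [Finset.prod_const]
      _ ≤ 2 ^ m := by
          refine pow_le_pow_right₀ (by norm_num) ?_
          simpa using Finset.card_le_univ t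
  have hpiBmeas : MeasurableSet (Set.univ.pi B) := MeasurableSet.univ_pi hB
  have hgoalLHS : ∫ x in Set.univ.pi B, G (fun j => x ((S.orderIsoOfFin rfl j : Fin m))) ∂(piM m)
      = ∫ x, (Set.univ.pi B).indicator GS x ∂(piM m) := by
    rw [integral_indicator hpiBmeas]
  rw [hgoalLHS]
  have hcube : ∀ᵐ x ∂(piM m), x ∈ Set.univ.pi (fun _ : Fin m => Set.Icc (0:ℝ) 1) := by
    have hpim : piM m = (Measure.pi fun _ : Fin m => (volume : Measure ℝ)).restrict
        (Set.univ.pi fun _ => Set.Icc (0:ℝ) 1) := by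
      simpa [piM, mu01] using pi_restrict (fun _ : Fin m => (volume : Measure ℝ))
        (fun _ => Set.Icc (0:ℝ) 1) (fun _ => measurableSet_Icc)
    rw [hpim]
    exact ae_restrict_mem (MeasurableSet.univ_pi fun _ => measurableSet_Icc)
  have haeq : (Set.univ.pi B).indicator GS =ᵐ[piM m]
      fun x => ∑ t ∈ (Finset.univ : Finset (Fin m)).powerset,
        ((∏ i ∈ t, ε i) * (∏ i ∈ Finset.univ \ t, c i)) * ((∏ i ∈ t, H (x i)) * GS x) := by
    filter_upwards [hcube] with x hx
    have hxI : ∀ i, x i ∈ Set.Icc (0:ℝ) 1 := fun i => hx i (Set.mem_univ i)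
    have hind : (Set.univ.pi B).indicator GS x
        = (∏ i, Set.indicator (B i) (fun _ => (1:ℂ)) (x i)) * GS x := by
      by_cases hxB : x ∈ Set.univ.pi B
      · rw [Set.indicator_of_mem hxB]
        rw [Finset.prod_congr rfl (fun i _ =>
          Set.indicator_of_mem (hxB i (Set.mem_univ i)) (fun _ => (1:ℂ)))]
        simp
      · rw [Set.indicator_of_notMem hxB]
        have : ∃ i, x i ∉ B i := by
          by_contra hcon
          push_neg at hcon
          exact hxB fun i _ => hcon i
        obtain ⟨i, hi⟩ := this
        rw [Finset.prod_eq_zero (Finset.mem_univ i) (Set.indicator_of_notMem hi _)]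
        simp
    rw [hind]
    rw [Finset.prod_congr rfl (fun i _ => by rw [hdecomp i (x i) (hxI i), add_comm])]
    rw [Finset.prod_add, Finset.sum_mul]
    refine Finset.sum_congr rfl fun t _ => ?_
    rw [Finset.prod_mul_distrib]
    ring
  rw [integral_congr_ae haeq,
    integral_finset_sum _ (fun t _ => ((hINT t).const_mul _))]
  have hpull : ∀ t ∈ (Finset.univ : Finset (Fin m)).powerset,
      ∫ x, ((∏ i ∈ t, ε i) * (∏ i ∈ Finset.univ \ t, c i)) * ((∏ i ∈ t, H (x i)) * GS x) ∂(piM m)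
        = ((∏ i ∈ t, ε i) * (∏ i ∈ Finset.univ \ t, c i)) *
          ∫ x, (∏ i ∈ t, H (x i)) * GS x ∂(piM m) := fun t _ => integral_const_mul _ _
  rw [Finset.sum_congr rfl hpull]
  rw [Finset.sum_eq_single_of_mem S (Finset.mem_powerset.2 (Finset.subset_univ S)) ?kill]
  case kill =>
    intro t _ htS
    rw [mul_eq_zero]; right
    by_cases hts : t ⊆ S
    · obtain ⟨i₀, hi₀S, hi₀t⟩ :=
        Finset.exists_of_ssubset (Finset.ssubset_iff_subset_ne.2 ⟨hts, htS⟩)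
      refine integral_eq_zero_of_update _ (hINT t) i₀ fun x => ?_
      set j₀ : Fin S.card := (S.orderIsoOfFin rfl).symm ⟨i₀, hi₀S⟩ with hj₀
      have hembj₀ : emb j₀ = i₀ := by
        show ((S.orderIsoOfFin rfl) j₀ : Fin m) = i₀
        rw [hj₀, OrderIso.apply_symm_apply]
      have hGup : ∀ s : ℝ, GS (Function.update x i₀ s) = G (Function.update (proj x) j₀ s) := by
        intro s
        show G (proj (Function.update x i₀ s)) = G (Function.update (proj x) j₀ s)
        congr 1
        funext j
        show (Function.update x i₀ s) (emb j) = Function.update (proj x) j₀ s j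
        by_cases hj : j = j₀
        · subst hj
          rw [hembj₀]
          simp [Function.update_self]
        · have h1 : emb j ≠ i₀ := fun h => hj (hembinj (h.trans hembj₀.symm))
          rw [Function.update_of_ne h1, Function.update_of_ne hj]
      have hprodup : ∀ s : ℝ, (∏ i ∈ t, H (Function.update x i₀ s i)) = ∏ i ∈ t, H (x i) := by
        intro s
        refine Finset.prod_congr rfl fun i hi => ?_
        have hne : i ≠ i₀ := fun h => hi₀t (h ▸ hi)
        rw [Function.update_of_ne hne]
      simp_rw [hGup, hprodup]
      rw [integral_const_mul _ _, hGmarg j₀ (proj x), mul_zero]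
    · obtain ⟨i₀, hi₀t, hi₀S⟩ := Finset.not_subset.1 hts
      refine integral_eq_zero_of_update _ (hINT t) i₀ fun x => ?_
      have hGup : ∀ s : ℝ, GS (Function.update x i₀ s) = GS x := by
        intro s
        show G (proj (Function.update x i₀ s)) = G (proj x)
        congr 1
        funext j
        show (Function.update x i₀ s) (emb j) = x (emb j)
        have hne : emb j ≠ i₀ := fun h => hi₀S (h ▸ hembmem j)
        exact Function.update_of_ne hne _ _
      have hprodup : ∀ s : ℝ, (∏ i ∈ t, H (Function.update x i₀ s i))
          = H s * ∏ i ∈ t.erase i₀, H (x i) := by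
        intro s
        rw [← Finset.mul_prod_erase t _ hi₀t, Function.update_self]
        congr 1
        refine Finset.prod_congr rfl fun i hi => ?_
        rw [Function.update_of_ne (Finset.ne_of_mem_erase hi)]
      simp_rw [hGup, hprodup, mul_assoc]
      rw [integral_mul_const, hH0, zero_mul]
  -- surviving term
  have hSprod : ∀ x : Fin m → ℝ, (∏ i ∈ S, H (x i)) = ∏ j : Fin S.card, H (proj x j) := by
    intro x
    rw [← Finset.prod_coe_sort S (fun i => H (x i))]
    exact (Equiv.prod_comp (S.orderIsoOfFin rfl).toEquiv
      (fun (i : {a // a ∈ S}) => H (x (i : Fin m)))).symm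
  have hΦint : Integrable (fun y : Fin S.card → ℝ => (∏ j, H (y j)) * G y) (piM S.card) := by
    refine Integrable.bdd_mul hGint
      ((Finset.measurable_prod Finset.univ fun j _ =>
        hHm.comp (measurable_pi_apply j)).aestronglyMeasurable) (c := 2 ^ S.card) (ae_of_all _ fun y => ?_)
    calc ‖∏ j, H (y j)‖ = ∏ j, ‖H (y j)‖ := norm_prod _ _
      _ ≤ ∏ _j : Fin S.card, 2 := Finset.prod_le_prod (fun j _ => norm_nonneg _) (fun j _ => hHbd _)
      _ = 2 ^ S.card := by simp [Finset.prod_const]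
  have hlast : ∫ x, (∏ i ∈ S, H (x i)) * GS x ∂(piM m)
      = ∫ y, (∏ j, H (y j)) * G y ∂(piM S.card) := by
    simp_rw [hSprod]
    have hmeasΦ : AEStronglyMeasurable (fun y : Fin S.card → ℝ => (∏ j, H (y j)) * G y)
        (Measure.map proj (piM m)) := by
      rw [hmp.map_eq]; exact hΦint.aestronglyMeasurable
    have hmapint := MeasureTheory.integral_map hmp.measurable.aemeasurable hmeasΦ
    rw [hmp.map_eq] at hmapint
    rw [← hmapint]
  rw [hlast]

end SymAux

open SymAux in
/-- the "if" direction for symmetric functions. If `f` is built from symmetric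
mean-zero kernels `g_k` on the levels `k ∈ K(m,r,α)`, then `∫_{A^{m−r} × (A^c)^r} f = 0`
for every `A ⊆ [0,1]` of measure `α`. -/
theorem symmetric_if {m r : ℕ} (hm : 1 ≤ m) (hr : r ≤ m)
    (α : ℝ) (hα : α ∈ Set.Ioo (0:ℝ) 1)
    (g : (k : ℕ) → (Fin k → ℝ) → ℂ)
    (hgsym : ∀ k, ∀ σ : Equiv.Perm (Fin k), ∀ x : Fin k → ℝ, g k (x ∘ σ) = g k x)
    (hgint : ∀ k, IntegrableOn (g k) (unitCube k))
    (hgmarg : ∀ k, ∀ i : Fin k, ∀ x : Fin k → ℝ,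
        ∫ t in (0:ℝ)..1, g k (Function.update x i t) = 0)
    (f : (Fin m → ℝ) → ℂ)
    (hf : ∀ x : Fin m → ℝ,
        f x = ∑ S ∈ Finset.univ.filter (fun S : Finset (Fin m) => S.card ∈ Kset m r α),
          g S.card (fun j => x ((S.orderIsoOfFin rfl j : Fin m)))) :
    ∀ A : Set ℝ, MeasurableSet A → A ⊆ Set.Icc (0:ℝ) 1 → volume A = ENNReal.ofReal α →
      ∫ x in Set.univ.pi (fun i : Fin m =>
          if (i : ℕ) < m - r then A else Set.Icc (0:ℝ) 1 \ A), f x = 0 := by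
  intro A hAmeas hAsub hAvol
  classical
  obtain ⟨hα0, hα1⟩ := hα
  set B : Fin m → Set ℝ :=
    fun i : Fin m => if (i : ℕ) < m - r then A else Set.Icc (0:ℝ) 1 \ A with hB
  have hBmeas : ∀ i, MeasurableSet (B i) := by
    intro i
    rw [hB]
    dsimp only
    split
    · exact hAmeas
    · exact measurableSet_Icc.diff hAmeas
  have hBsub : ∀ i, B i ⊆ Set.Icc (0:ℝ) 1 := by
    intro i
    rw [hB]
    dsimp only
    split
    · exact hAsub
    · exact Set.diff_subset
  -- convert the measure to piM m restricted
  have hfac : ∀ i, (volume : Measure ℝ).restrict (B i) = SymAux.mu01.restrict (B i) := by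
    intro i
    rw [show SymAux.mu01 = volume.restrict (Set.Icc (0:ℝ) 1) from rfl,
      Measure.restrict_restrict (hBmeas i), Set.inter_eq_left.mpr (hBsub i)]
  have hmeq : (volume : Measure (Fin m → ℝ)).restrict (Set.univ.pi B)
      = (SymAux.piM m).restrict (Set.univ.pi B) := by
    rw [MeasureTheory.volume_pi, ← SymAux.pi_restrict (fun _ => (volume : Measure ℝ)) B hBmeas,
      show SymAux.piM m = Measure.pi (fun _ : Fin m => SymAux.mu01) from rfl,
      ← SymAux.pi_restrict (fun _ => SymAux.mu01) B hBmeas]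
    exact congrArg Measure.pi (funext hfac)
  show ∫ x in Set.univ.pi B, f x = 0
  rw [hmeq]
  simp only [hf]
  -- integrability of each g k w.r.t. piM
  have hcube : ∀ k : ℕ, (volume : Measure (Fin k → ℝ)).restrict (unitCube k) = SymAux.piM k := by
    intro k
    rw [MeasureTheory.volume_pi,
      show unitCube k = Set.univ.pi (fun _ : Fin k => Set.Icc (0:ℝ) 1) from rfl,
      ← SymAux.pi_restrict (fun _ => (volume : Measure ℝ)) (fun _ => Set.Icc (0:ℝ) 1)
        (fun _ => measurableSet_Icc)]
    rfl
  have hgint' : ∀ k, Integrable (g k) (SymAux.piM k) := by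
    intro k
    have := hgint k
    rwa [IntegrableOn, hcube k] at this
  have hGSint : ∀ S : Finset (Fin m),
      Integrable (fun x : Fin m → ℝ =>
        g S.card (fun j => x ((S.orderIsoOfFin rfl j : Fin m)))) (SymAux.piM m) := by
    intro S
    have hinj : Function.Injective (fun j : Fin S.card => ((S.orderIsoOfFin rfl j : Fin m))) :=
      fun a b hab => (S.orderIsoOfFin rfl).injective (Subtype.ext hab)
    have hmp := SymAux.measurePreserving_proj _ hinj
    have := (hmp.integrable_comp (hgint' S.card).aestronglyMeasurable).mpr (hgint' S.card)
    exact this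
  rw [integral_finset_sum _ (fun S _ => (hGSint S).integrableOn)]
  -- data for core
  set H : ℝ → ℂ := fun t => Set.indicator A (fun _ => (1:ℂ)) t - (α:ℂ) with hH
  have hHm : Measurable H := (measurable_const.indicator hAmeas).sub measurable_const
  have hHbd : ∀ t, ‖H t‖ ≤ 2 := by
    intro t
    rw [hH]
    refine le_trans (norm_sub_le _ _) ?_
    have h1 : ‖Set.indicator A (fun _ => (1:ℂ)) t‖ ≤ 1 := by
      by_cases ht : t ∈ A
      · rw [Set.indicator_of_mem ht]; simp
      · rw [Set.indicator_of_notMem ht]; simp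
    have h2 : ‖(α:ℂ)‖ ≤ 1 := by
      rw [Complex.norm_real]
      rw [Real.norm_eq_abs, abs_of_pos hα0]
      linarith
    linarith
  have hmuA : SymAux.mu01 A = ENNReal.ofReal α := by
    rw [show SymAux.mu01 = volume.restrict (Set.Icc (0:ℝ) 1) from rfl,
      Measure.restrict_apply hAmeas, Set.inter_eq_left.mpr hAsub, hAvol]
  have hH0 : ∫ t, H t ∂SymAux.mu01 = 0 := by
    rw [hH]
    rw [integral_sub ((integrable_const (1:ℂ)).indicator hAmeas) (integrable_const _)]
    rw [integral_indicator_const _ hAmeas, integral_const, measureReal_def, hmuA,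
      ENNReal.toReal_ofReal hα0.le, probReal_univ]
    simp
  set c : Fin m → ℂ := fun i => if (i : ℕ) < m - r then (α:ℂ) else (1 - α : ℂ) with hc
  set ε : Fin m → ℂ := fun i => if (i : ℕ) < m - r then (1:ℂ) else (-1:ℂ) with hε
  have hdecomp : ∀ i : Fin m, ∀ t ∈ Set.Icc (0:ℝ) 1,
      Set.indicator (B i) (fun _ => (1:ℂ)) t = c i + ε i * H t := by
    intro i t ht
    rw [hB, hc, hε, hH]
    dsimp only
    by_cases hi : (i : ℕ) < m - r
    · rw [if_pos hi, if_pos hi, if_pos hi]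
      ring
    · rw [if_neg hi, if_neg hi, if_neg hi]
      by_cases htA : t ∈ A
      · rw [Set.indicator_of_notMem (fun hmem : t ∈ Set.Icc (0:ℝ) 1 \ A => hmem.2 htA), Set.indicator_of_mem htA]
        push_cast
        ring
      · rw [Set.indicator_of_mem (show t ∈ Set.Icc (0:ℝ) 1 \ A from ⟨ht, htA⟩) (fun _ => (1:ℂ)), Set.indicator_of_notMem htA]
        push_cast
        ring
  have hGmarg' : ∀ (k : ℕ) (j : Fin k) (x : Fin k → ℝ),
      ∫ t, g k (Function.update x j t) ∂SymAux.mu01 = 0 := by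
    intro k j x
    show ∫ t in Set.Icc (0:ℝ) 1, g k (Function.update x j t) = 0
    rw [integral_Icc_eq_integral_Ioc, ← intervalIntegral.integral_of_le zero_le_one]
    exact hgmarg k j x
  -- apply core to each S
  have hSval : ∀ S ∈ Finset.univ.filter (fun S : Finset (Fin m) => S.card ∈ Kset m r α),
      ∫ x in Set.univ.pi B,
        g S.card (fun j => x ((S.orderIsoOfFin rfl j : Fin m))) ∂(SymAux.piM m)
      = ((∏ i ∈ S, ε i) * ∏ i ∈ Finset.univ \ S, c i) *
        ∫ y, (∏ j, H (y j)) * g S.card y ∂(SymAux.piM S.card) := by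
    intro S _
    exact SymAux.core S (g S.card) (hgint' S.card) (hGmarg' S.card) H hHm hHbd hH0 B hBmeas
      c ε hdecomp
  rw [Finset.sum_congr rfl hSval]
  -- combinatorics
  set P : Fin m → Prop := fun i => (i : ℕ) < m - r with hP
  have hLcard : (Finset.univ.filter P).card = m - r := card_filter_lt (Nat.sub_le m r)
  have hUcard : (Finset.univ.filter fun i => ¬ P i).card = r := by
    have := Finset.card_filter_add_card_filter_not (s := (Finset.univ : Finset (Fin m))) P
    rw [hLcard] at this
    simp only [Finset.card_univ, Fintype.card_fin] at this
    omega
  have hweval : ∀ S : Finset (Fin m),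
      ((∏ i ∈ S, ε i) * ∏ i ∈ Finset.univ \ S, c i)
      = (-1 : ℂ) ^ ((S.filter fun i => ¬ P i).card)
        * (α:ℂ) ^ (m - r - (S.filter P).card)
        * ((1:ℂ) - α) ^ (r - (S.filter fun i => ¬ P i).card) := by
    intro S
    have h1 : (∏ i ∈ S, ε i) = (-1 : ℂ) ^ ((S.filter fun i => ¬ P i).card) := by
      rw [← Finset.prod_filter_mul_prod_filter_not S P]
      have e1 : ∏ i ∈ S.filter P, ε i = 1 := by
        refine Finset.prod_eq_one fun i hi => ?_
        rw [hε]; exact if_pos (Finset.mem_filter.1 hi).2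
      have e2 : ∏ i ∈ S.filter (fun i => ¬ P i), ε i
          = (-1 : ℂ) ^ ((S.filter fun i => ¬ P i).card) := by
        rw [Finset.prod_congr rfl fun i hi => show ε i = -1 from
          if_neg (Finset.mem_filter.1 hi).2, Finset.prod_const]
      rw [e1, e2, one_mul]
    have hfPL : ((Finset.univ \ S).filter P) = (Finset.univ.filter P) \ (S.filter P) := by
      ext i
      simp only [Finset.mem_filter, Finset.mem_sdiff, Finset.mem_univ, true_and]
      tauto
    have hfPU : ((Finset.univ \ S).filter fun i => ¬ P i)
        = (Finset.univ.filter fun i => ¬ P i) \ (S.filter fun i => ¬ P i) := by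
      ext i
      simp only [Finset.mem_filter, Finset.mem_sdiff, Finset.mem_univ, true_and]
      tauto
    have h2 : (∏ i ∈ Finset.univ \ S, c i)
        = (α:ℂ) ^ (m - r - (S.filter P).card)
          * ((1:ℂ) - α) ^ (r - (S.filter fun i => ¬ P i).card) := by
      rw [← Finset.prod_filter_mul_prod_filter_not (Finset.univ \ S) P]
      have e1 : ∏ i ∈ (Finset.univ \ S).filter P, c i
          = (α:ℂ) ^ (m - r - (S.filter P).card) := by
        rw [Finset.prod_congr rfl fun i hi => show c i = (α:ℂ) from
          if_pos (Finset.mem_filter.1 hi).2, Finset.prod_const, hfPL,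
          Finset.card_sdiff_of_subset (Finset.filter_subset_filter P (Finset.subset_univ S)), hLcard]
      have e2 : ∏ i ∈ (Finset.univ \ S).filter (fun i => ¬ P i), c i
          = ((1:ℂ) - α) ^ (r - (S.filter fun i => ¬ P i).card) := by
        rw [Finset.prod_congr rfl fun i hi => show c i = ((1:ℂ) - α) from
          if_neg (Finset.mem_filter.1 hi).2, Finset.prod_const, hfPU,
          Finset.card_sdiff_of_subset (Finset.filter_subset_filter _ (Finset.subset_univ S)), hUcard]
      rw [e1, e2]
    rw [h1, h2]
    ring
  -- fiber over cardinality
  have hmaps : ∀ S ∈ Finset.univ.filter (fun S : Finset (Fin m) => S.card ∈ Kset m r α),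
      S.card ∈ Kset m r α := fun S hS => (Finset.mem_filter.1 hS).2
  rw [← Finset.sum_fiberwise_of_maps_to hmaps]
  refine Finset.sum_eq_zero fun k hk => ?_
  have hfilterk : (Finset.univ.filter (fun S : Finset (Fin m) => S.card ∈ Kset m r α)).filter
      (fun S => S.card = k) = Finset.univ.filter (fun S : Finset (Fin m) => S.card = k) := by
    ext S
    simp only [Finset.mem_filter, Finset.mem_univ, true_and]
    constructor
    · rintro ⟨-, h⟩; exact h
    · intro h; exact ⟨h ▸ hk, h⟩
  rw [hfilterk]
  -- get data from k ∈ Kset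
  have hkmem := hk
  rw [Kset, Finset.mem_filter, Finset.mem_Icc] at hkmem
  obtain ⟨⟨hk1, hkm⟩, hKsum⟩ := hkmem
  -- rewrite each term
  have hterm : ∀ S ∈ Finset.univ.filter (fun S : Finset (Fin m) => S.card = k),
      ((∏ i ∈ S, ε i) * ∏ i ∈ Finset.univ \ S, c i) *
        (∫ y, (∏ j, H (y j)) * g S.card y ∂(SymAux.piM S.card))
      = ((-1 : ℂ) ^ ((S.filter fun i => ¬ P i).card)
          * (α:ℂ) ^ (m - r - (k - (S.filter fun i => ¬ P i).card))
          * ((1:ℂ) - α) ^ (r - (S.filter fun i => ¬ P i).card)) *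
        (∫ y : Fin k → ℝ, (∏ j, H (y j)) * g k y ∂(SymAux.piM k)) := by
    intro S hS
    have hcard : S.card = k := (Finset.mem_filter.1 hS).2
    have hab : (S.filter P).card + (S.filter fun i => ¬ P i).card = k := by
      rw [← hcard]; exact Finset.card_filter_add_card_filter_not P
    have haS : (S.filter P).card = k - (S.filter fun i => ¬ P i).card := by omega
    rw [hweval S, haS]
    subst hcard
    rfl
  rw [Finset.sum_congr rfl hterm, ← Finset.sum_mul]
  -- sum of weights vanishes
  have hwzero : ∑ S ∈ Finset.univ.filter (fun S : Finset (Fin m) => S.card = k),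
      ((-1 : ℂ) ^ ((S.filter fun i => ¬ P i).card)
        * (α:ℂ) ^ (m - r - (k - (S.filter fun i => ¬ P i).card))
        * ((1:ℂ) - α) ^ (r - (S.filter fun i => ¬ P i).card)) = 0 := by
    have hmaps2 : ∀ S ∈ Finset.univ.filter (fun S : Finset (Fin m) => S.card = k),
        (S.filter fun i => ¬ P i).card ∈ Finset.range (k + 1) := by
      intro S hS
      rw [Finset.mem_range, Nat.lt_succ_iff, ← (Finset.mem_filter.1 hS).2]
      exact Finset.card_filter_le S _
    rw [← Finset.sum_fiberwise_of_maps_to hmaps2]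
    have hinner : ∀ i ∈ Finset.range (k + 1),
        ∑ S ∈ (Finset.univ.filter (fun S : Finset (Fin m) => S.card = k)).filter
            (fun S => (S.filter fun a => ¬ P a).card = i),
          ((-1 : ℂ) ^ ((S.filter fun a => ¬ P a).card)
            * (α:ℂ) ^ (m - r - (k - (S.filter fun a => ¬ P a).card))
            * ((1:ℂ) - α) ^ (r - (S.filter fun a => ¬ P a).card))
        = ((m - r).choose (k - i) * (r.choose i) : ℕ) •
            ((-1 : ℂ) ^ i * (α:ℂ) ^ (m - r - (k - i)) * ((1:ℂ) - α) ^ (r - i)) := by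
      intro i hi
      have hik : i ≤ k := Nat.lt_succ_iff.mp (Finset.mem_range.mp hi)
      have hconst : ∀ S ∈ (Finset.univ.filter (fun S : Finset (Fin m) => S.card = k)).filter
          (fun S => (S.filter fun a => ¬ P a).card = i),
          ((-1 : ℂ) ^ ((S.filter fun a => ¬ P a).card)
            * (α:ℂ) ^ (m - r - (k - (S.filter fun a => ¬ P a).card))
            * ((1:ℂ) - α) ^ (r - (S.filter fun a => ¬ P a).card))
          = ((-1 : ℂ) ^ i * (α:ℂ) ^ (m - r - (k - i)) * ((1:ℂ) - α) ^ (r - i)) := by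
        intro S hS
        rw [(Finset.mem_filter.1 hS).2]
      rw [Finset.sum_congr rfl hconst, Finset.sum_const]
      congr 1
      rw [Finset.filter_filter]
      rw [card_fiber P k i hik, hLcard, hUcard]
    rw [Finset.sum_congr rfl hinner]
    have hreal := keyident hr hkm hα0 hα1 hKsum
    calc ∑ i ∈ Finset.range (k + 1),
          ((m - r).choose (k - i) * (r.choose i) : ℕ) •
            ((-1 : ℂ) ^ i * (α:ℂ) ^ (m - r - (k - i)) * ((1:ℂ) - α) ^ (r - i))
        = ((∑ i ∈ Finset.range (k + 1),
            ((m - r).choose (k - i) : ℝ) * (r.choose i : ℝ) * (-1) ^ i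
              * α ^ (m - r - (k - i)) * (1 - α) ^ (r - i) : ℝ) : ℂ) := by
          push_cast
          refine Finset.sum_congr rfl fun i _ => ?_
          ring
      _ = 0 := by rw [hreal]; simp
  rw [hwzero, zero_mul]
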